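/- Let μ be a nonadditive measure and K ≥ 1. Then μ is K-relaxed subadditive (i.e., μ(A∪B) ≤ K(μ(A)+μ(B)) for all disjoint A,B ∈ 𝒜) if and only if the Sugeno integral is K-relaxed subadditive, i.e., Su(μ, f+g) ≤ K(Su(μ,f) + Su(μ,g)) for all measurable f,g : X → [0,∞). In particular, the Sugeno integral is subadditive if and only if μ is subadditive. -/

import Mathlib

open scoped NNReal ENNReal
open ENNReal Filter Topology

variable {X : Type*} [MeasurableSpace X]

/-- The Sugeno integral of `g` w.r.t. a nonadditive measure `μ`:
`Su(μ,g) := sup_{t ∈ [0,∞)} min(t, μ({g > t}))`. -/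
noncomputable def Su (μ : Set X → ℝ≥0∞) (g : X → ℝ≥0∞) : ℝ≥0∞ :=
  ⨆ t : ℝ≥0, min (t : ℝ≥0∞) (μ {x | (t : ℝ≥0∞) < g x})

lemma iSup_min_coe' (m : ℝ≥0∞) : (⨆ t : ℝ≥0, min (t : ℝ≥0∞) m) = m := by
  refine le_antisymm (iSup_le fun t => min_le_right _ _) ?_
  rcases eq_or_ne m ⊤ with rfl | hm
  · have h1 : (⨆ t : ℝ≥0, min (t : ℝ≥0∞) ⊤) = ⨆ t : ℝ≥0, (t : ℝ≥0∞) := by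
      simp
    rw [h1, top_le_iff, ENNReal.iSup_coe_eq_top]
    exact not_bddAbove_iff.mpr fun x => ⟨x + 1, Set.mem_range_self _, lt_add_one x⟩
  · exact le_iSup_of_le m.toNNReal (by rw [ENNReal.coe_toNNReal hm]; simp)

theorem key' (μ : Set X → ℝ≥0∞)
    (hmono : ∀ ⦃A B : Set X⦄, MeasurableSet A → MeasurableSet B → A ⊆ B → μ A ≤ μ B)
    (K : ℝ≥0) (hK : 1 ≤ K) :
    (∀ A B : Set X, MeasurableSet A → MeasurableSet B → Disjoint A B →
        μ (A ∪ B) ≤ (K : ℝ≥0∞) * (μ A + μ B)) ↔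
      (∀ f g : X → ℝ≥0, Measurable f → Measurable g →
        Su μ (fun x => ((f x : ℝ≥0∞) + (g x : ℝ≥0∞))) ≤
          (K : ℝ≥0∞) * (Su μ (fun x => (f x : ℝ≥0∞)) + Su μ (fun x => (g x : ℝ≥0∞)))) := by
  have hK' : (1 : ℝ≥0∞) ≤ (K : ℝ≥0∞) := by exact_mod_cast hK
  constructor
  · intro hsub f g hf hg
    have hF : Measurable fun x => (f x : ℝ≥0∞) := hf.coe_nnreal_ennreal
    have hG : Measurable fun x => (g x : ℝ≥0∞) := hg.coe_nnreal_ennreal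
    set a := Su μ (fun x => (f x : ℝ≥0∞)) with ha_def
    set b := Su μ (fun x => (g x : ℝ≥0∞)) with hb_def
    refine iSup_le fun t => ?_
    by_cases ht : (t : ℝ≥0∞) ≤ a + b
    · calc min (t : ℝ≥0∞) _ ≤ (t : ℝ≥0∞) := min_le_left _ _
        _ ≤ a + b := ht
        _ = 1 * (a + b) := (one_mul _).symm
        _ ≤ (K : ℝ≥0∞) * (a + b) := mul_le_mul_left hK' _
    · push_neg at ht
      have hane : a ≠ ⊤ := ne_top_of_lt (lt_of_le_of_lt le_self_add (ht.trans_le le_top))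
      have hbne : b ≠ ⊤ := ne_top_of_lt (lt_of_le_of_lt le_add_self (ht.trans_le le_top))
      set aN := a.toNNReal
      set bN := b.toNNReal
      have hab : aN + bN < t := by
        have : ((aN + bN : ℝ≥0) : ℝ≥0∞) < (t : ℝ≥0∞) := by
          rwa [ENNReal.coe_add, ENNReal.coe_toNNReal hane, ENNReal.coe_toNNReal hbne]
        exact_mod_cast this
      set d : ℝ≥0 := t - (aN + bN) with hd_def
      have hdpos : 0 < d := tsub_pos_of_lt hab
      set s₁ : ℝ≥0 := aN + d / 2 with hs₁_def
      set s₂ : ℝ≥0 := bN + d / 2 with hs₂_def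
      have hsum : s₁ + s₂ = t := by
        have h1 : s₁ + s₂ = (aN + bN) + (d / 2 + d / 2) := by ring
        rw [h1, add_halves, hd_def, add_tsub_cancel_of_le hab.le]
      have has₁ : a < (s₁ : ℝ≥0∞) := by
        rw [← ENNReal.coe_toNNReal hane]
        exact_mod_cast lt_add_of_pos_right aN (half_pos hdpos)
      have hbs₂ : b < (s₂ : ℝ≥0∞) := by
        rw [← ENNReal.coe_toNNReal hbne]
        exact_mod_cast lt_add_of_pos_right bN (half_pos hdpos)
      have hμf : μ {x | (s₁ : ℝ≥0∞) < (f x : ℝ≥0∞)} ≤ a := by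
        have h1 : min (s₁ : ℝ≥0∞) (μ {x | (s₁ : ℝ≥0∞) < (f x : ℝ≥0∞)}) ≤ a :=
          le_iSup (fun s : ℝ≥0 => min (s : ℝ≥0∞) (μ {x | (s : ℝ≥0∞) < (f x : ℝ≥0∞)})) s₁
        rcases min_le_iff.mp h1 with h | h
        · exact absurd h (not_le_of_gt has₁)
        · exact h
      have hμg : μ {x | (s₂ : ℝ≥0∞) < (g x : ℝ≥0∞)} ≤ b := by
        have h1 : min (s₂ : ℝ≥0∞) (μ {x | (s₂ : ℝ≥0∞) < (g x : ℝ≥0∞)}) ≤ b :=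
          le_iSup (fun s : ℝ≥0 => min (s : ℝ≥0∞) (μ {x | (s : ℝ≥0∞) < (g x : ℝ≥0∞)})) s₂
        rcases min_le_iff.mp h1 with h | h
        · exact absurd h (not_le_of_gt hbs₂)
        · exact h
      set A := {x | (s₁ : ℝ≥0∞) < (f x : ℝ≥0∞)} with hA_def
      set B := {x | (s₂ : ℝ≥0∞) < (g x : ℝ≥0∞)} with hB_def
      have hAm : MeasurableSet A := measurableSet_lt measurable_const hF
      have hBm : MeasurableSet B := measurableSet_lt measurable_const hG
      have hcover : {x | (t : ℝ≥0∞) < (f x : ℝ≥0∞) + (g x : ℝ≥0∞)} ⊆ A ∪ B := by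
        intro x hx
        by_contra hx'
        simp only [Set.mem_union, not_or] at hx'
        obtain ⟨hxA, hxB⟩ := hx'
        simp only [hA_def, hB_def, Set.mem_setOf_eq, not_lt] at hxA hxB
        have : (f x : ℝ≥0∞) + (g x : ℝ≥0∞) ≤ (t : ℝ≥0∞) := by
          calc (f x : ℝ≥0∞) + (g x : ℝ≥0∞) ≤ (s₁ : ℝ≥0∞) + (s₂ : ℝ≥0∞) := add_le_add hxA hxB
            _ = ((s₁ + s₂ : ℝ≥0) : ℝ≥0∞) := (ENNReal.coe_add _ _).symm
            _ = (t : ℝ≥0∞) := by rw [hsum]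
        exact absurd hx (not_lt_of_ge this)
      have hunion : μ (A ∪ B) ≤ (K : ℝ≥0∞) * (μ A + μ B) := by
        have h1 : A ∪ B = A ∪ (B \ A) := (Set.union_diff_self).symm
        have h2 : μ (A ∪ (B \ A)) ≤ (K : ℝ≥0∞) * (μ A + μ (B \ A)) :=
          hsub A (B \ A) hAm (hBm.diff hAm) disjoint_sdiff_self_right
        have h3 : μ (B \ A) ≤ μ B := hmono (hBm.diff hAm) hBm Set.diff_subset
        calc μ (A ∪ B) = μ (A ∪ (B \ A)) := by rw [← h1]
          _ ≤ (K : ℝ≥0∞) * (μ A + μ (B \ A)) := h2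
          _ ≤ (K : ℝ≥0∞) * (μ A + μ B) := mul_le_mul_right (add_le_add_right h3 _) _
      have hmeas_sum : MeasurableSet {x | (t : ℝ≥0∞) < (f x : ℝ≥0∞) + (g x : ℝ≥0∞)} :=
        measurableSet_lt measurable_const (hF.add hG)
      calc min (t : ℝ≥0∞) (μ {x | (t : ℝ≥0∞) < (f x : ℝ≥0∞) + (g x : ℝ≥0∞)})
          ≤ μ {x | (t : ℝ≥0∞) < (f x : ℝ≥0∞) + (g x : ℝ≥0∞)} := min_le_right _ _
        _ ≤ μ (A ∪ B) := hmono hmeas_sum (hAm.union hBm) hcover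
        _ ≤ (K : ℝ≥0∞) * (μ A + μ B) := hunion
        _ ≤ (K : ℝ≥0∞) * (a + b) := mul_le_mul_right (add_le_add hμf hμg) _
  · intro hint A B hA hB hAB
    have key2 : ∀ t₀ : ℝ≥0, min (t₀ : ℝ≥0∞) (μ (A ∪ B)) ≤ (K : ℝ≥0∞) * (μ A + μ B) := by
      intro t₀
      set c : ℝ≥0 := t₀ + 1 with hc_def
      set f : X → ℝ≥0 := A.indicator (fun _ => c) with hf_def
      set g : X → ℝ≥0 := B.indicator (fun _ => c) with hg_def
      have hf : Measurable f := measurable_const.indicator hA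
      have hg : Measurable g := measurable_const.indicator hB
      have hSf : Su μ (fun x => (f x : ℝ≥0∞)) ≤ μ A := by
        refine iSup_le fun s => le_trans (min_le_right _ _) (hmono ?_ hA ?_)
        · exact measurableSet_lt measurable_const hf.coe_nnreal_ennreal
        · intro x hx
          by_contra hxA
          simp only [Set.mem_setOf_eq, hf_def, Set.indicator_of_notMem hxA] at hx
          simp at hx
      have hSg : Su μ (fun x => (g x : ℝ≥0∞)) ≤ μ B := by
        refine iSup_le fun s => le_trans (min_le_right _ _) (hmono ?_ hB ?_)
        · exact measurableSet_lt measurable_const hg.coe_nnreal_ennreal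
        · intro x hx
          by_contra hxB
          simp only [Set.mem_setOf_eq, hg_def, Set.indicator_of_notMem hxB] at hx
          simp at hx
      have hset : {x | (t₀ : ℝ≥0∞) < (f x : ℝ≥0∞) + (g x : ℝ≥0∞)} = A ∪ B := by
        ext x
        simp only [Set.mem_setOf_eq, Set.mem_union]
        constructor
        · intro hx
          by_contra hx'
          push_neg at hx'
          obtain ⟨hxA, hxB⟩ := hx'
          simp only [hf_def, hg_def, Set.indicator_of_notMem hxA,
            Set.indicator_of_notMem hxB] at hx
          simp at hx
        · intro hx
          have : (c : ℝ≥0∞) ≤ (f x : ℝ≥0∞) + (g x : ℝ≥0∞) := by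
            rcases hx with hx | hx
            · calc (c : ℝ≥0∞) = (f x : ℝ≥0∞) := by
                    rw [hf_def, Set.indicator_of_mem hx]
                _ ≤ _ := le_self_add
            · calc (c : ℝ≥0∞) = (g x : ℝ≥0∞) := by
                    rw [hg_def, Set.indicator_of_mem hx]
                _ ≤ _ := le_add_self
          refine lt_of_lt_of_le ?_ this
          rw [hc_def]
          exact_mod_cast lt_add_one t₀
      have h1 : min (t₀ : ℝ≥0∞) (μ (A ∪ B)) ≤
          Su μ (fun x => (f x : ℝ≥0∞) + (g x : ℝ≥0∞)) := by
        have := le_iSup (fun s : ℝ≥0 =>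
          min (s : ℝ≥0∞) (μ {x | (s : ℝ≥0∞) < (f x : ℝ≥0∞) + (g x : ℝ≥0∞)})) t₀
        rwa [hset] at this
      calc min (t₀ : ℝ≥0∞) (μ (A ∪ B))
          ≤ Su μ (fun x => (f x : ℝ≥0∞) + (g x : ℝ≥0∞)) := h1
        _ ≤ (K : ℝ≥0∞) * (Su μ (fun x => (f x : ℝ≥0∞)) + Su μ (fun x => (g x : ℝ≥0∞))) :=
            hint f g hf hg
        _ ≤ (K : ℝ≥0∞) * (μ A + μ B) := mul_le_mul_right (add_le_add hSf hSg) _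
    calc μ (A ∪ B) = ⨆ t₀ : ℝ≥0, min (t₀ : ℝ≥0∞) (μ (A ∪ B)) := (iSup_min_coe' _).symm
      _ ≤ (K : ℝ≥0∞) * (μ A + μ B) := iSup_le key2


/-- `μ` is `K`-relaxed subadditive iff the Sugeno integral is `K`-relaxed subadditive;
in particular, the Sugeno integral is subadditive iff `μ` is subadditive. -/
theorem sugeno_relaxed_subadditive_iff
    (μ : Set X → ℝ≥0∞) (h0 : μ ∅ = 0)
    (hmono : ∀ ⦃A B : Set X⦄, MeasurableSet A → MeasurableSet B → A ⊆ B → μ A ≤ μ B)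
    (K : ℝ≥0) (hK : 1 ≤ K) :
    ((∀ A B : Set X, MeasurableSet A → MeasurableSet B → Disjoint A B →
        μ (A ∪ B) ≤ (K : ℝ≥0∞) * (μ A + μ B)) ↔
      (∀ f g : X → ℝ≥0, Measurable f → Measurable g →
        Su μ (fun x => ((f x : ℝ≥0∞) + (g x : ℝ≥0∞))) ≤
          (K : ℝ≥0∞) * (Su μ (fun x => (f x : ℝ≥0∞)) + Su μ (fun x => (g x : ℝ≥0∞))))) ∧
    ((∀ A B : Set X, MeasurableSet A → MeasurableSet B → Disjoint A B →
        μ (A ∪ B) ≤ μ A + μ B) ↔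
      (∀ f g : X → ℝ≥0, Measurable f → Measurable g →
        Su μ (fun x => ((f x : ℝ≥0∞) + (g x : ℝ≥0∞))) ≤
          Su μ (fun x => (f x : ℝ≥0∞)) + Su μ (fun x => (g x : ℝ≥0∞)))) := by
  refine ⟨key' μ hmono K hK, ?_⟩
  have h1 := key' μ hmono 1 le_rfl
  simpa using h1
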